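/- A matrix g ∈ GL(6,3) maps each of the four lines of F4 to itself (under the action sending a line W to {v·g : v ∈ W}, vectors viewed as row vectors) if and only if g is the block-diagonal matrix diag(E,E,E) for some E ∈ GL(2,3). -/

import Mathlib

open Matrix

abbrev F3 := ZMod 3
abbrev V6 := Fin 6 → F3

/-- The line (2-dim subspace) represented by a 2×6 matrix: the span of its rows. -/
def lineOf (A : Matrix (Fin 2) (Fin 6) F3) : Submodule F3 V6 :=
  Submodule.span F3 (Set.range A)

/-- The perp of a subspace `W` with respect to a 6×6 Gram matrix `M`:
`{x | xᵀ M w = 0 for all w ∈ W}`. -/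
def perp (M : Matrix (Fin 6) (Fin 6) F3) (W : Submodule F3 V6) : Submodule F3 V6 where
  carrier := {x | ∀ w ∈ W, x ⬝ᵥ M.mulVec w = 0}
  add_mem' := by
    intro a b ha hb w hw
    simp only [Set.mem_setOf_eq] at *
    rw [add_dotProduct, ha w hw, hb w hw, add_zero]
  zero_mem' := by
    intro w hw
    exact zero_dotProduct _
  smul_mem' := by
    intro c x hx w hw
    simp only [Set.mem_setOf_eq] at *
    rw [smul_dotProduct, hx w hw, smul_zero]

/-- A 2×6 matrix built from three 2×2 blocks. -/
def blk3 (A B C : Matrix (Fin 2) (Fin 2) F3) : Matrix (Fin 2) (Fin 6) F3 :=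
  Matrix.of fun i j => ![A, B, C] ⟨(j : ℕ) / 2, by omega⟩ i ⟨(j : ℕ) % 2, by omega⟩

/-- A 6×6 matrix built from nine 2×2 blocks. -/
def blk33 (M : Matrix (Fin 3) (Fin 3) (Matrix (Fin 2) (Fin 2) F3)) :
    Matrix (Fin 6) (Fin 6) F3 :=
  Matrix.of fun i j =>
    M ⟨(i : ℕ) / 2, by omega⟩ ⟨(j : ℕ) / 2, by omega⟩ ⟨(i : ℕ) % 2, by omega⟩ ⟨(j : ℕ) % 2, by omega⟩

/-- The 2×2 block of a 6×6 matrix in block-position `(i, j)`. -/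
def blkAt (M : Matrix (Fin 6) (Fin 6) F3) (i j : Fin 3) : Matrix (Fin 2) (Fin 2) F3 :=
  Matrix.of fun a b => M ⟨2 * (i : ℕ) + (a : ℕ), by omega⟩ ⟨2 * (j : ℕ) + (b : ℕ), by omega⟩

/-- Two (not necessarily distinct) lines are opposite w.r.t. `M` if `ℓ ∩ m^⊥ = 0`. -/
def Opp (M : Matrix (Fin 6) (Fin 6) F3) (ℓ m : Submodule F3 V6) : Prop :=
  ℓ ⊓ perp M m = ⊥

/-- The set `F4` of four lines of `PG(5,3)`, represented by
`(I O O)`, `(O I O)`, `(O O I)` and `(I I I)`. -/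
def F4 : Set (Submodule F3 V6) :=
  {lineOf (blk3 1 0 0), lineOf (blk3 0 1 0), lineOf (blk3 0 0 1), lineOf (blk3 1 1 1)}

/-- The block-diagonal matrix `diag(E, E, E)`. -/
def diag3 (E : Matrix (Fin 2) (Fin 2) F3) : Matrix (Fin 6) (Fin 6) F3 :=
  blk33 !![E, 0, 0; 0, E, 0; 0, 0, E]

@[simp] lemma blk3_app_0 (A B C : Matrix (Fin 2) (Fin 2) F3) (i : Fin 2) : blk3 A B C i (0 : Fin 6) = A i 0 := by
  show blk3 A B C i ⟨0, by norm_num⟩ = A i 0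
  simp only [blk3, Matrix.of_apply, Fin.val_mk]
  norm_num

@[simp] lemma blk3_app_mk_0 (A B C : Matrix (Fin 2) (Fin 2) F3) (i : Fin 2) (h : (0:ℕ) < 6) : blk3 A B C i ⟨0, h⟩ = A i 0 := by
  simp only [blk3, Matrix.of_apply, Fin.val_mk]
  norm_num

@[simp] lemma blk3_app_1 (A B C : Matrix (Fin 2) (Fin 2) F3) (i : Fin 2) : blk3 A B C i (1 : Fin 6) = A i 1 := by
  show blk3 A B C i ⟨1, by norm_num⟩ = A i 1
  simp only [blk3, Matrix.of_apply, Fin.val_mk]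
  norm_num

@[simp] lemma blk3_app_mk_1 (A B C : Matrix (Fin 2) (Fin 2) F3) (i : Fin 2) (h : (1:ℕ) < 6) : blk3 A B C i ⟨1, h⟩ = A i 1 := by
  simp only [blk3, Matrix.of_apply, Fin.val_mk]
  norm_num

@[simp] lemma blk3_app_2 (A B C : Matrix (Fin 2) (Fin 2) F3) (i : Fin 2) : blk3 A B C i (2 : Fin 6) = B i 0 := by
  show blk3 A B C i ⟨2, by norm_num⟩ = B i 0
  simp only [blk3, Matrix.of_apply, Fin.val_mk]
  norm_num

@[simp] lemma blk3_app_mk_2 (A B C : Matrix (Fin 2) (Fin 2) F3) (i : Fin 2) (h : (2:ℕ) < 6) : blk3 A B C i ⟨2, h⟩ = B i 0 := by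
  simp only [blk3, Matrix.of_apply, Fin.val_mk]
  norm_num

@[simp] lemma blk3_app_3 (A B C : Matrix (Fin 2) (Fin 2) F3) (i : Fin 2) : blk3 A B C i (3 : Fin 6) = B i 1 := by
  show blk3 A B C i ⟨3, by norm_num⟩ = B i 1
  simp only [blk3, Matrix.of_apply, Fin.val_mk]
  norm_num

@[simp] lemma blk3_app_mk_3 (A B C : Matrix (Fin 2) (Fin 2) F3) (i : Fin 2) (h : (3:ℕ) < 6) : blk3 A B C i ⟨3, h⟩ = B i 1 := by
  simp only [blk3, Matrix.of_apply, Fin.val_mk]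
  norm_num

@[simp] lemma blk3_app_4 (A B C : Matrix (Fin 2) (Fin 2) F3) (i : Fin 2) : blk3 A B C i (4 : Fin 6) = C i 0 := by
  show blk3 A B C i ⟨4, by norm_num⟩ = C i 0
  simp only [blk3, Matrix.of_apply, Fin.val_mk]
  norm_num

@[simp] lemma blk3_app_mk_4 (A B C : Matrix (Fin 2) (Fin 2) F3) (i : Fin 2) (h : (4:ℕ) < 6) : blk3 A B C i ⟨4, h⟩ = C i 0 := by
  simp only [blk3, Matrix.of_apply, Fin.val_mk]
  norm_num

@[simp] lemma blk3_app_5 (A B C : Matrix (Fin 2) (Fin 2) F3) (i : Fin 2) : blk3 A B C i (5 : Fin 6) = C i 1 := by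
  show blk3 A B C i ⟨5, by norm_num⟩ = C i 1
  simp only [blk3, Matrix.of_apply, Fin.val_mk]
  norm_num

@[simp] lemma blk3_app_mk_5 (A B C : Matrix (Fin 2) (Fin 2) F3) (i : Fin 2) (h : (5:ℕ) < 6) : blk3 A B C i ⟨5, h⟩ = C i 1 := by
  simp only [blk3, Matrix.of_apply, Fin.val_mk]
  norm_num

@[simp] lemma diag3_app_0_0 (E : Matrix (Fin 2) (Fin 2) F3) : diag3 E (0 : Fin 6) (0 : Fin 6) = E 0 0 := by
  show diag3 E ⟨0, by norm_num⟩ ⟨0, by norm_num⟩ = E 0 0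
  simp only [diag3, blk33, Matrix.of_apply, Fin.val_mk]
  norm_num

@[simp] lemma diag3_app_mk_0_0 (E : Matrix (Fin 2) (Fin 2) F3) (h1 : (0:ℕ) < 6) (h2 : (0:ℕ) < 6) : diag3 E ⟨0, h1⟩ ⟨0, h2⟩ = E 0 0 := by
  simp only [diag3, blk33, Matrix.of_apply, Fin.val_mk]
  norm_num

@[simp] lemma diag3_app_0_1 (E : Matrix (Fin 2) (Fin 2) F3) : diag3 E (0 : Fin 6) (1 : Fin 6) = E 0 1 := by
  show diag3 E ⟨0, by norm_num⟩ ⟨1, by norm_num⟩ = E 0 1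
  simp only [diag3, blk33, Matrix.of_apply, Fin.val_mk]
  norm_num

@[simp] lemma diag3_app_mk_0_1 (E : Matrix (Fin 2) (Fin 2) F3) (h1 : (0:ℕ) < 6) (h2 : (1:ℕ) < 6) : diag3 E ⟨0, h1⟩ ⟨1, h2⟩ = E 0 1 := by
  simp only [diag3, blk33, Matrix.of_apply, Fin.val_mk]
  norm_num

@[simp] lemma diag3_app_0_2 (E : Matrix (Fin 2) (Fin 2) F3) : diag3 E (0 : Fin 6) (2 : Fin 6) = (0 : F3) := by
  show diag3 E ⟨0, by norm_num⟩ ⟨2, by norm_num⟩ = (0 : F3)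
  simp only [diag3, blk33, Matrix.of_apply, Fin.val_mk]
  norm_num

@[simp] lemma diag3_app_mk_0_2 (E : Matrix (Fin 2) (Fin 2) F3) (h1 : (0:ℕ) < 6) (h2 : (2:ℕ) < 6) : diag3 E ⟨0, h1⟩ ⟨2, h2⟩ = (0 : F3) := by
  simp only [diag3, blk33, Matrix.of_apply, Fin.val_mk]
  norm_num

@[simp] lemma diag3_app_0_3 (E : Matrix (Fin 2) (Fin 2) F3) : diag3 E (0 : Fin 6) (3 : Fin 6) = (0 : F3) := by
  show diag3 E ⟨0, by norm_num⟩ ⟨3, by norm_num⟩ = (0 : F3)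
  simp only [diag3, blk33, Matrix.of_apply, Fin.val_mk]
  norm_num

@[simp] lemma diag3_app_mk_0_3 (E : Matrix (Fin 2) (Fin 2) F3) (h1 : (0:ℕ) < 6) (h2 : (3:ℕ) < 6) : diag3 E ⟨0, h1⟩ ⟨3, h2⟩ = (0 : F3) := by
  simp only [diag3, blk33, Matrix.of_apply, Fin.val_mk]
  norm_num

@[simp] lemma diag3_app_0_4 (E : Matrix (Fin 2) (Fin 2) F3) : diag3 E (0 : Fin 6) (4 : Fin 6) = (0 : F3) := by
  show diag3 E ⟨0, by norm_num⟩ ⟨4, by norm_num⟩ = (0 : F3)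
  simp only [diag3, blk33, Matrix.of_apply, Fin.val_mk]
  norm_num

@[simp] lemma diag3_app_mk_0_4 (E : Matrix (Fin 2) (Fin 2) F3) (h1 : (0:ℕ) < 6) (h2 : (4:ℕ) < 6) : diag3 E ⟨0, h1⟩ ⟨4, h2⟩ = (0 : F3) := by
  simp only [diag3, blk33, Matrix.of_apply, Fin.val_mk]
  norm_num

@[simp] lemma diag3_app_0_5 (E : Matrix (Fin 2) (Fin 2) F3) : diag3 E (0 : Fin 6) (5 : Fin 6) = (0 : F3) := by
  show diag3 E ⟨0, by norm_num⟩ ⟨5, by norm_num⟩ = (0 : F3)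
  simp only [diag3, blk33, Matrix.of_apply, Fin.val_mk]
  norm_num

@[simp] lemma diag3_app_mk_0_5 (E : Matrix (Fin 2) (Fin 2) F3) (h1 : (0:ℕ) < 6) (h2 : (5:ℕ) < 6) : diag3 E ⟨0, h1⟩ ⟨5, h2⟩ = (0 : F3) := by
  simp only [diag3, blk33, Matrix.of_apply, Fin.val_mk]
  norm_num

@[simp] lemma diag3_app_1_0 (E : Matrix (Fin 2) (Fin 2) F3) : diag3 E (1 : Fin 6) (0 : Fin 6) = E 1 0 := by
  show diag3 E ⟨1, by norm_num⟩ ⟨0, by norm_num⟩ = E 1 0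
  simp only [diag3, blk33, Matrix.of_apply, Fin.val_mk]
  norm_num

@[simp] lemma diag3_app_mk_1_0 (E : Matrix (Fin 2) (Fin 2) F3) (h1 : (1:ℕ) < 6) (h2 : (0:ℕ) < 6) : diag3 E ⟨1, h1⟩ ⟨0, h2⟩ = E 1 0 := by
  simp only [diag3, blk33, Matrix.of_apply, Fin.val_mk]
  norm_num

@[simp] lemma diag3_app_1_1 (E : Matrix (Fin 2) (Fin 2) F3) : diag3 E (1 : Fin 6) (1 : Fin 6) = E 1 1 := by
  show diag3 E ⟨1, by norm_num⟩ ⟨1, by norm_num⟩ = E 1 1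
  simp only [diag3, blk33, Matrix.of_apply, Fin.val_mk]
  norm_num

@[simp] lemma diag3_app_mk_1_1 (E : Matrix (Fin 2) (Fin 2) F3) (h1 : (1:ℕ) < 6) (h2 : (1:ℕ) < 6) : diag3 E ⟨1, h1⟩ ⟨1, h2⟩ = E 1 1 := by
  simp only [diag3, blk33, Matrix.of_apply, Fin.val_mk]
  norm_num

@[simp] lemma diag3_app_1_2 (E : Matrix (Fin 2) (Fin 2) F3) : diag3 E (1 : Fin 6) (2 : Fin 6) = (0 : F3) := by
  show diag3 E ⟨1, by norm_num⟩ ⟨2, by norm_num⟩ = (0 : F3)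
  simp only [diag3, blk33, Matrix.of_apply, Fin.val_mk]
  norm_num

@[simp] lemma diag3_app_mk_1_2 (E : Matrix (Fin 2) (Fin 2) F3) (h1 : (1:ℕ) < 6) (h2 : (2:ℕ) < 6) : diag3 E ⟨1, h1⟩ ⟨2, h2⟩ = (0 : F3) := by
  simp only [diag3, blk33, Matrix.of_apply, Fin.val_mk]
  norm_num

@[simp] lemma diag3_app_1_3 (E : Matrix (Fin 2) (Fin 2) F3) : diag3 E (1 : Fin 6) (3 : Fin 6) = (0 : F3) := by
  show diag3 E ⟨1, by norm_num⟩ ⟨3, by norm_num⟩ = (0 : F3)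
  simp only [diag3, blk33, Matrix.of_apply, Fin.val_mk]
  norm_num

@[simp] lemma diag3_app_mk_1_3 (E : Matrix (Fin 2) (Fin 2) F3) (h1 : (1:ℕ) < 6) (h2 : (3:ℕ) < 6) : diag3 E ⟨1, h1⟩ ⟨3, h2⟩ = (0 : F3) := by
  simp only [diag3, blk33, Matrix.of_apply, Fin.val_mk]
  norm_num

@[simp] lemma diag3_app_1_4 (E : Matrix (Fin 2) (Fin 2) F3) : diag3 E (1 : Fin 6) (4 : Fin 6) = (0 : F3) := by
  show diag3 E ⟨1, by norm_num⟩ ⟨4, by norm_num⟩ = (0 : F3)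
  simp only [diag3, blk33, Matrix.of_apply, Fin.val_mk]
  norm_num

@[simp] lemma diag3_app_mk_1_4 (E : Matrix (Fin 2) (Fin 2) F3) (h1 : (1:ℕ) < 6) (h2 : (4:ℕ) < 6) : diag3 E ⟨1, h1⟩ ⟨4, h2⟩ = (0 : F3) := by
  simp only [diag3, blk33, Matrix.of_apply, Fin.val_mk]
  norm_num

@[simp] lemma diag3_app_1_5 (E : Matrix (Fin 2) (Fin 2) F3) : diag3 E (1 : Fin 6) (5 : Fin 6) = (0 : F3) := by
  show diag3 E ⟨1, by norm_num⟩ ⟨5, by norm_num⟩ = (0 : F3)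
  simp only [diag3, blk33, Matrix.of_apply, Fin.val_mk]
  norm_num

@[simp] lemma diag3_app_mk_1_5 (E : Matrix (Fin 2) (Fin 2) F3) (h1 : (1:ℕ) < 6) (h2 : (5:ℕ) < 6) : diag3 E ⟨1, h1⟩ ⟨5, h2⟩ = (0 : F3) := by
  simp only [diag3, blk33, Matrix.of_apply, Fin.val_mk]
  norm_num

@[simp] lemma diag3_app_2_0 (E : Matrix (Fin 2) (Fin 2) F3) : diag3 E (2 : Fin 6) (0 : Fin 6) = (0 : F3) := by
  show diag3 E ⟨2, by norm_num⟩ ⟨0, by norm_num⟩ = (0 : F3)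
  simp only [diag3, blk33, Matrix.of_apply, Fin.val_mk]
  norm_num

@[simp] lemma diag3_app_mk_2_0 (E : Matrix (Fin 2) (Fin 2) F3) (h1 : (2:ℕ) < 6) (h2 : (0:ℕ) < 6) : diag3 E ⟨2, h1⟩ ⟨0, h2⟩ = (0 : F3) := by
  simp only [diag3, blk33, Matrix.of_apply, Fin.val_mk]
  norm_num

@[simp] lemma diag3_app_2_1 (E : Matrix (Fin 2) (Fin 2) F3) : diag3 E (2 : Fin 6) (1 : Fin 6) = (0 : F3) := by
  show diag3 E ⟨2, by norm_num⟩ ⟨1, by norm_num⟩ = (0 : F3)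
  simp only [diag3, blk33, Matrix.of_apply, Fin.val_mk]
  norm_num

@[simp] lemma diag3_app_mk_2_1 (E : Matrix (Fin 2) (Fin 2) F3) (h1 : (2:ℕ) < 6) (h2 : (1:ℕ) < 6) : diag3 E ⟨2, h1⟩ ⟨1, h2⟩ = (0 : F3) := by
  simp only [diag3, blk33, Matrix.of_apply, Fin.val_mk]
  norm_num

@[simp] lemma diag3_app_2_2 (E : Matrix (Fin 2) (Fin 2) F3) : diag3 E (2 : Fin 6) (2 : Fin 6) = E 0 0 := by
  show diag3 E ⟨2, by norm_num⟩ ⟨2, by norm_num⟩ = E 0 0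
  simp only [diag3, blk33, Matrix.of_apply, Fin.val_mk]
  norm_num

@[simp] lemma diag3_app_mk_2_2 (E : Matrix (Fin 2) (Fin 2) F3) (h1 : (2:ℕ) < 6) (h2 : (2:ℕ) < 6) : diag3 E ⟨2, h1⟩ ⟨2, h2⟩ = E 0 0 := by
  simp only [diag3, blk33, Matrix.of_apply, Fin.val_mk]
  norm_num

@[simp] lemma diag3_app_2_3 (E : Matrix (Fin 2) (Fin 2) F3) : diag3 E (2 : Fin 6) (3 : Fin 6) = E 0 1 := by
  show diag3 E ⟨2, by norm_num⟩ ⟨3, by norm_num⟩ = E 0 1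
  simp only [diag3, blk33, Matrix.of_apply, Fin.val_mk]
  norm_num

@[simp] lemma diag3_app_mk_2_3 (E : Matrix (Fin 2) (Fin 2) F3) (h1 : (2:ℕ) < 6) (h2 : (3:ℕ) < 6) : diag3 E ⟨2, h1⟩ ⟨3, h2⟩ = E 0 1 := by
  simp only [diag3, blk33, Matrix.of_apply, Fin.val_mk]
  norm_num

@[simp] lemma diag3_app_2_4 (E : Matrix (Fin 2) (Fin 2) F3) : diag3 E (2 : Fin 6) (4 : Fin 6) = (0 : F3) := by
  show diag3 E ⟨2, by norm_num⟩ ⟨4, by norm_num⟩ = (0 : F3)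
  simp only [diag3, blk33, Matrix.of_apply, Fin.val_mk]
  norm_num

@[simp] lemma diag3_app_mk_2_4 (E : Matrix (Fin 2) (Fin 2) F3) (h1 : (2:ℕ) < 6) (h2 : (4:ℕ) < 6) : diag3 E ⟨2, h1⟩ ⟨4, h2⟩ = (0 : F3) := by
  simp only [diag3, blk33, Matrix.of_apply, Fin.val_mk]
  norm_num

@[simp] lemma diag3_app_2_5 (E : Matrix (Fin 2) (Fin 2) F3) : diag3 E (2 : Fin 6) (5 : Fin 6) = (0 : F3) := by
  show diag3 E ⟨2, by norm_num⟩ ⟨5, by norm_num⟩ = (0 : F3)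
  simp only [diag3, blk33, Matrix.of_apply, Fin.val_mk]
  norm_num

@[simp] lemma diag3_app_mk_2_5 (E : Matrix (Fin 2) (Fin 2) F3) (h1 : (2:ℕ) < 6) (h2 : (5:ℕ) < 6) : diag3 E ⟨2, h1⟩ ⟨5, h2⟩ = (0 : F3) := by
  simp only [diag3, blk33, Matrix.of_apply, Fin.val_mk]
  norm_num

@[simp] lemma diag3_app_3_0 (E : Matrix (Fin 2) (Fin 2) F3) : diag3 E (3 : Fin 6) (0 : Fin 6) = (0 : F3) := by
  show diag3 E ⟨3, by norm_num⟩ ⟨0, by norm_num⟩ = (0 : F3)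
  simp only [diag3, blk33, Matrix.of_apply, Fin.val_mk]
  norm_num

@[simp] lemma diag3_app_mk_3_0 (E : Matrix (Fin 2) (Fin 2) F3) (h1 : (3:ℕ) < 6) (h2 : (0:ℕ) < 6) : diag3 E ⟨3, h1⟩ ⟨0, h2⟩ = (0 : F3) := by
  simp only [diag3, blk33, Matrix.of_apply, Fin.val_mk]
  norm_num

@[simp] lemma diag3_app_3_1 (E : Matrix (Fin 2) (Fin 2) F3) : diag3 E (3 : Fin 6) (1 : Fin 6) = (0 : F3) := by
  show diag3 E ⟨3, by norm_num⟩ ⟨1, by norm_num⟩ = (0 : F3)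
  simp only [diag3, blk33, Matrix.of_apply, Fin.val_mk]
  norm_num

@[simp] lemma diag3_app_mk_3_1 (E : Matrix (Fin 2) (Fin 2) F3) (h1 : (3:ℕ) < 6) (h2 : (1:ℕ) < 6) : diag3 E ⟨3, h1⟩ ⟨1, h2⟩ = (0 : F3) := by
  simp only [diag3, blk33, Matrix.of_apply, Fin.val_mk]
  norm_num

@[simp] lemma diag3_app_3_2 (E : Matrix (Fin 2) (Fin 2) F3) : diag3 E (3 : Fin 6) (2 : Fin 6) = E 1 0 := by
  show diag3 E ⟨3, by norm_num⟩ ⟨2, by norm_num⟩ = E 1 0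
  simp only [diag3, blk33, Matrix.of_apply, Fin.val_mk]
  norm_num

@[simp] lemma diag3_app_mk_3_2 (E : Matrix (Fin 2) (Fin 2) F3) (h1 : (3:ℕ) < 6) (h2 : (2:ℕ) < 6) : diag3 E ⟨3, h1⟩ ⟨2, h2⟩ = E 1 0 := by
  simp only [diag3, blk33, Matrix.of_apply, Fin.val_mk]
  norm_num

@[simp] lemma diag3_app_3_3 (E : Matrix (Fin 2) (Fin 2) F3) : diag3 E (3 : Fin 6) (3 : Fin 6) = E 1 1 := by
  show diag3 E ⟨3, by norm_num⟩ ⟨3, by norm_num⟩ = E 1 1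
  simp only [diag3, blk33, Matrix.of_apply, Fin.val_mk]
  norm_num

@[simp] lemma diag3_app_mk_3_3 (E : Matrix (Fin 2) (Fin 2) F3) (h1 : (3:ℕ) < 6) (h2 : (3:ℕ) < 6) : diag3 E ⟨3, h1⟩ ⟨3, h2⟩ = E 1 1 := by
  simp only [diag3, blk33, Matrix.of_apply, Fin.val_mk]
  norm_num

@[simp] lemma diag3_app_3_4 (E : Matrix (Fin 2) (Fin 2) F3) : diag3 E (3 : Fin 6) (4 : Fin 6) = (0 : F3) := by
  show diag3 E ⟨3, by norm_num⟩ ⟨4, by norm_num⟩ = (0 : F3)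
  simp only [diag3, blk33, Matrix.of_apply, Fin.val_mk]
  norm_num

@[simp] lemma diag3_app_mk_3_4 (E : Matrix (Fin 2) (Fin 2) F3) (h1 : (3:ℕ) < 6) (h2 : (4:ℕ) < 6) : diag3 E ⟨3, h1⟩ ⟨4, h2⟩ = (0 : F3) := by
  simp only [diag3, blk33, Matrix.of_apply, Fin.val_mk]
  norm_num

@[simp] lemma diag3_app_3_5 (E : Matrix (Fin 2) (Fin 2) F3) : diag3 E (3 : Fin 6) (5 : Fin 6) = (0 : F3) := by
  show diag3 E ⟨3, by norm_num⟩ ⟨5, by norm_num⟩ = (0 : F3)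
  simp only [diag3, blk33, Matrix.of_apply, Fin.val_mk]
  norm_num

@[simp] lemma diag3_app_mk_3_5 (E : Matrix (Fin 2) (Fin 2) F3) (h1 : (3:ℕ) < 6) (h2 : (5:ℕ) < 6) : diag3 E ⟨3, h1⟩ ⟨5, h2⟩ = (0 : F3) := by
  simp only [diag3, blk33, Matrix.of_apply, Fin.val_mk]
  norm_num

@[simp] lemma diag3_app_4_0 (E : Matrix (Fin 2) (Fin 2) F3) : diag3 E (4 : Fin 6) (0 : Fin 6) = (0 : F3) := by
  show diag3 E ⟨4, by norm_num⟩ ⟨0, by norm_num⟩ = (0 : F3)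
  simp only [diag3, blk33, Matrix.of_apply, Fin.val_mk]
  norm_num

@[simp] lemma diag3_app_mk_4_0 (E : Matrix (Fin 2) (Fin 2) F3) (h1 : (4:ℕ) < 6) (h2 : (0:ℕ) < 6) : diag3 E ⟨4, h1⟩ ⟨0, h2⟩ = (0 : F3) := by
  simp only [diag3, blk33, Matrix.of_apply, Fin.val_mk]
  norm_num

@[simp] lemma diag3_app_4_1 (E : Matrix (Fin 2) (Fin 2) F3) : diag3 E (4 : Fin 6) (1 : Fin 6) = (0 : F3) := by
  show diag3 E ⟨4, by norm_num⟩ ⟨1, by norm_num⟩ = (0 : F3)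
  simp only [diag3, blk33, Matrix.of_apply, Fin.val_mk]
  norm_num

@[simp] lemma diag3_app_mk_4_1 (E : Matrix (Fin 2) (Fin 2) F3) (h1 : (4:ℕ) < 6) (h2 : (1:ℕ) < 6) : diag3 E ⟨4, h1⟩ ⟨1, h2⟩ = (0 : F3) := by
  simp only [diag3, blk33, Matrix.of_apply, Fin.val_mk]
  norm_num

@[simp] lemma diag3_app_4_2 (E : Matrix (Fin 2) (Fin 2) F3) : diag3 E (4 : Fin 6) (2 : Fin 6) = (0 : F3) := by
  show diag3 E ⟨4, by norm_num⟩ ⟨2, by norm_num⟩ = (0 : F3)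
  simp only [diag3, blk33, Matrix.of_apply, Fin.val_mk]
  norm_num

@[simp] lemma diag3_app_mk_4_2 (E : Matrix (Fin 2) (Fin 2) F3) (h1 : (4:ℕ) < 6) (h2 : (2:ℕ) < 6) : diag3 E ⟨4, h1⟩ ⟨2, h2⟩ = (0 : F3) := by
  simp only [diag3, blk33, Matrix.of_apply, Fin.val_mk]
  norm_num

@[simp] lemma diag3_app_4_3 (E : Matrix (Fin 2) (Fin 2) F3) : diag3 E (4 : Fin 6) (3 : Fin 6) = (0 : F3) := by
  show diag3 E ⟨4, by norm_num⟩ ⟨3, by norm_num⟩ = (0 : F3)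
  simp only [diag3, blk33, Matrix.of_apply, Fin.val_mk]
  norm_num

@[simp] lemma diag3_app_mk_4_3 (E : Matrix (Fin 2) (Fin 2) F3) (h1 : (4:ℕ) < 6) (h2 : (3:ℕ) < 6) : diag3 E ⟨4, h1⟩ ⟨3, h2⟩ = (0 : F3) := by
  simp only [diag3, blk33, Matrix.of_apply, Fin.val_mk]
  norm_num

@[simp] lemma diag3_app_4_4 (E : Matrix (Fin 2) (Fin 2) F3) : diag3 E (4 : Fin 6) (4 : Fin 6) = E 0 0 := by
  show diag3 E ⟨4, by norm_num⟩ ⟨4, by norm_num⟩ = E 0 0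
  simp only [diag3, blk33, Matrix.of_apply, Fin.val_mk]
  norm_num

@[simp] lemma diag3_app_mk_4_4 (E : Matrix (Fin 2) (Fin 2) F3) (h1 : (4:ℕ) < 6) (h2 : (4:ℕ) < 6) : diag3 E ⟨4, h1⟩ ⟨4, h2⟩ = E 0 0 := by
  simp only [diag3, blk33, Matrix.of_apply, Fin.val_mk]
  norm_num

@[simp] lemma diag3_app_4_5 (E : Matrix (Fin 2) (Fin 2) F3) : diag3 E (4 : Fin 6) (5 : Fin 6) = E 0 1 := by
  show diag3 E ⟨4, by norm_num⟩ ⟨5, by norm_num⟩ = E 0 1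
  simp only [diag3, blk33, Matrix.of_apply, Fin.val_mk]
  norm_num

@[simp] lemma diag3_app_mk_4_5 (E : Matrix (Fin 2) (Fin 2) F3) (h1 : (4:ℕ) < 6) (h2 : (5:ℕ) < 6) : diag3 E ⟨4, h1⟩ ⟨5, h2⟩ = E 0 1 := by
  simp only [diag3, blk33, Matrix.of_apply, Fin.val_mk]
  norm_num

@[simp] lemma diag3_app_5_0 (E : Matrix (Fin 2) (Fin 2) F3) : diag3 E (5 : Fin 6) (0 : Fin 6) = (0 : F3) := by
  show diag3 E ⟨5, by norm_num⟩ ⟨0, by norm_num⟩ = (0 : F3)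
  simp only [diag3, blk33, Matrix.of_apply, Fin.val_mk]
  norm_num

@[simp] lemma diag3_app_mk_5_0 (E : Matrix (Fin 2) (Fin 2) F3) (h1 : (5:ℕ) < 6) (h2 : (0:ℕ) < 6) : diag3 E ⟨5, h1⟩ ⟨0, h2⟩ = (0 : F3) := by
  simp only [diag3, blk33, Matrix.of_apply, Fin.val_mk]
  norm_num

@[simp] lemma diag3_app_5_1 (E : Matrix (Fin 2) (Fin 2) F3) : diag3 E (5 : Fin 6) (1 : Fin 6) = (0 : F3) := by
  show diag3 E ⟨5, by norm_num⟩ ⟨1, by norm_num⟩ = (0 : F3)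
  simp only [diag3, blk33, Matrix.of_apply, Fin.val_mk]
  norm_num

@[simp] lemma diag3_app_mk_5_1 (E : Matrix (Fin 2) (Fin 2) F3) (h1 : (5:ℕ) < 6) (h2 : (1:ℕ) < 6) : diag3 E ⟨5, h1⟩ ⟨1, h2⟩ = (0 : F3) := by
  simp only [diag3, blk33, Matrix.of_apply, Fin.val_mk]
  norm_num

@[simp] lemma diag3_app_5_2 (E : Matrix (Fin 2) (Fin 2) F3) : diag3 E (5 : Fin 6) (2 : Fin 6) = (0 : F3) := by
  show diag3 E ⟨5, by norm_num⟩ ⟨2, by norm_num⟩ = (0 : F3)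
  simp only [diag3, blk33, Matrix.of_apply, Fin.val_mk]
  norm_num

@[simp] lemma diag3_app_mk_5_2 (E : Matrix (Fin 2) (Fin 2) F3) (h1 : (5:ℕ) < 6) (h2 : (2:ℕ) < 6) : diag3 E ⟨5, h1⟩ ⟨2, h2⟩ = (0 : F3) := by
  simp only [diag3, blk33, Matrix.of_apply, Fin.val_mk]
  norm_num

@[simp] lemma diag3_app_5_3 (E : Matrix (Fin 2) (Fin 2) F3) : diag3 E (5 : Fin 6) (3 : Fin 6) = (0 : F3) := by
  show diag3 E ⟨5, by norm_num⟩ ⟨3, by norm_num⟩ = (0 : F3)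
  simp only [diag3, blk33, Matrix.of_apply, Fin.val_mk]
  norm_num

@[simp] lemma diag3_app_mk_5_3 (E : Matrix (Fin 2) (Fin 2) F3) (h1 : (5:ℕ) < 6) (h2 : (3:ℕ) < 6) : diag3 E ⟨5, h1⟩ ⟨3, h2⟩ = (0 : F3) := by
  simp only [diag3, blk33, Matrix.of_apply, Fin.val_mk]
  norm_num

@[simp] lemma diag3_app_5_4 (E : Matrix (Fin 2) (Fin 2) F3) : diag3 E (5 : Fin 6) (4 : Fin 6) = E 1 0 := by
  show diag3 E ⟨5, by norm_num⟩ ⟨4, by norm_num⟩ = E 1 0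
  simp only [diag3, blk33, Matrix.of_apply, Fin.val_mk]
  norm_num

@[simp] lemma diag3_app_mk_5_4 (E : Matrix (Fin 2) (Fin 2) F3) (h1 : (5:ℕ) < 6) (h2 : (4:ℕ) < 6) : diag3 E ⟨5, h1⟩ ⟨4, h2⟩ = E 1 0 := by
  simp only [diag3, blk33, Matrix.of_apply, Fin.val_mk]
  norm_num

@[simp] lemma diag3_app_5_5 (E : Matrix (Fin 2) (Fin 2) F3) : diag3 E (5 : Fin 6) (5 : Fin 6) = E 1 1 := by
  show diag3 E ⟨5, by norm_num⟩ ⟨5, by norm_num⟩ = E 1 1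
  simp only [diag3, blk33, Matrix.of_apply, Fin.val_mk]
  norm_num

@[simp] lemma diag3_app_mk_5_5 (E : Matrix (Fin 2) (Fin 2) F3) (h1 : (5:ℕ) < 6) (h2 : (5:ℕ) < 6) : diag3 E ⟨5, h1⟩ ⟨5, h2⟩ = E 1 1 := by
  simp only [diag3, blk33, Matrix.of_apply, Fin.val_mk]
  norm_num

lemma range_two (A : Matrix (Fin 2) (Fin 6) F3) : Set.range A = {A 0, A 1} := by
  ext x
  constructor
  · rintro ⟨i, rfl⟩; fin_cases i <;> simp
  · rintro (rfl | rfl) <;> exact ⟨_, rfl⟩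

lemma mem_lineOf (A : Matrix (Fin 2) (Fin 6) F3) (x : V6) :
    x ∈ lineOf A ↔ ∃ a b : F3, a • A 0 + b • A 1 = x := by
  rw [lineOf, range_two, Submodule.mem_span_pair]

lemma lineOf_map (A : Matrix (Fin 2) (Fin 6) F3) (g : Matrix (Fin 6) (Fin 6) F3) :
    (lineOf A).map g.vecMulLinear = lineOf (A * g) := by
  rw [lineOf, Submodule.map_span, ← Set.range_comp (g := ⇑g.vecMulLinear) (f := (A : Fin 2 → V6))]
  have : Matrix.vecMulLinear g ∘ A = (A * g) := by
    funext i j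
    change Matrix.vecMulLinear g (A i) j = _
    simp [Matrix.vecMulLinear_apply, Matrix.mul_apply, Matrix.vecMul, dotProduct]
  rw [this, lineOf]

lemma mul_blk3 (E A B C : Matrix (Fin 2) (Fin 2) F3) :
    E * blk3 A B C = blk3 (E * A) (E * B) (E * C) := by
  ext i j
  obtain ⟨jv, hj⟩ := j
  interval_cases jv <;>
    simp [Matrix.mul_apply, Fin.sum_univ_two]

lemma blk3_mul_diag3 (A B C E : Matrix (Fin 2) (Fin 2) F3) :
    blk3 A B C * diag3 E = blk3 (A * E) (B * E) (C * E) := by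
  ext i j
  obtain ⟨jv, hj⟩ := j
  interval_cases jv <;>
    simp [Matrix.mul_apply, Fin.sum_univ_six, Fin.sum_univ_two]

lemma lineOf_mul_le (E : Matrix (Fin 2) (Fin 2) F3) (A : Matrix (Fin 2) (Fin 6) F3) :
    lineOf (E * A) ≤ lineOf A := by
  rw [lineOf, Submodule.span_le]
  rintro x ⟨i, rfl⟩
  have : (E * A) i = E i 0 • A 0 + E i 1 • A 1 := by
    funext j
    simp [Matrix.mul_apply, Fin.sum_univ_two]
  rw [this]
  exact Submodule.add_mem _
    (Submodule.smul_mem _ _ (Submodule.subset_span ⟨0, rfl⟩))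
    (Submodule.smul_mem _ _ (Submodule.subset_span ⟨1, rfl⟩))

lemma lineOf_unit_mul {E : Matrix (Fin 2) (Fin 2) F3} (hE : IsUnit E)
    (A : Matrix (Fin 2) (Fin 6) F3) : lineOf (E * A) = lineOf A := by
  obtain ⟨u, rfl⟩ := hE
  refine le_antisymm (lineOf_mul_le _ _) ?_
  have := lineOf_mul_le (↑u⁻¹) ((↑u : Matrix (Fin 2) (Fin 2) F3) * A)
  rwa [← Matrix.mul_assoc, Units.inv_mul, Matrix.one_mul] at this

lemma mem1 {x : V6} (hx : x ∈ lineOf (blk3 1 0 0)) :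
    x 2 = 0 ∧ x 3 = 0 ∧ x 4 = 0 ∧ x 5 = 0 := by
  obtain ⟨a, b, h⟩ := (mem_lineOf _ _).1 hx
  refine ⟨?_, ?_, ?_, ?_⟩ <;> rw [← h] <;> simp

lemma mem2 {x : V6} (hx : x ∈ lineOf (blk3 0 1 0)) :
    x 0 = 0 ∧ x 1 = 0 ∧ x 4 = 0 ∧ x 5 = 0 := by
  obtain ⟨a, b, h⟩ := (mem_lineOf _ _).1 hx
  refine ⟨?_, ?_, ?_, ?_⟩ <;> rw [← h] <;> simp

lemma mem3 {x : V6} (hx : x ∈ lineOf (blk3 0 0 1)) :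
    x 0 = 0 ∧ x 1 = 0 ∧ x 2 = 0 ∧ x 3 = 0 := by
  obtain ⟨a, b, h⟩ := (mem_lineOf _ _).1 hx
  refine ⟨?_, ?_, ?_, ?_⟩ <;> rw [← h] <;> simp

lemma mem4 {x : V6} (hx : x ∈ lineOf (blk3 1 1 1)) :
    x 2 = x 0 ∧ x 3 = x 1 ∧ x 4 = x 0 ∧ x 5 = x 1 := by
  obtain ⟨a, b, h⟩ := (mem_lineOf _ _).1 hx
  refine ⟨?_, ?_, ?_, ?_⟩ <;> rw [← h] <;> simp [Matrix.one_apply]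

lemma rows_in (A : Matrix (Fin 2) (Fin 6) F3) (g : Matrix (Fin 6) (Fin 6) F3)
    (h : (lineOf A).map g.vecMulLinear = lineOf A) (i : Fin 2) : (A * g) i ∈ lineOf A := by
  rw [lineOf_map] at h
  rw [← h]
  exact Submodule.subset_span ⟨i, rfl⟩

lemma fwd (g : Matrix (Fin 6) (Fin 6) F3)
    (h : ∀ ℓ ∈ F4, ℓ.map g.vecMulLinear = ℓ) : g = diag3 (blkAt g 0 0) := by
  have h1 := h _ (by simp [F4] : lineOf (blk3 1 0 0) ∈ F4)
  have h2 := h _ (by simp [F4] : lineOf (blk3 0 1 0) ∈ F4)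
  have h3 := h _ (by simp [F4] : lineOf (blk3 0 0 1) ∈ F4)
  have h4 := h _ (by simp [F4] : lineOf (blk3 1 1 1) ∈ F4)
  have r10 : (blk3 1 0 0 * g) 0 = g 0 := by
    funext j; simp [Matrix.mul_apply, Fin.sum_univ_six, Matrix.one_apply]
  have r11 : (blk3 1 0 0 * g) 1 = g 1 := by
    funext j; simp [Matrix.mul_apply, Fin.sum_univ_six, Matrix.one_apply]
  have r20 : (blk3 0 1 0 * g) 0 = g 2 := by
    funext j; simp [Matrix.mul_apply, Fin.sum_univ_six, Matrix.one_apply]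
  have r21 : (blk3 0 1 0 * g) 1 = g 3 := by
    funext j; simp [Matrix.mul_apply, Fin.sum_univ_six, Matrix.one_apply]
  have r30 : (blk3 0 0 1 * g) 0 = g 4 := by
    funext j; simp [Matrix.mul_apply, Fin.sum_univ_six, Matrix.one_apply]
  have r31 : (blk3 0 0 1 * g) 1 = g 5 := by
    funext j; simp [Matrix.mul_apply, Fin.sum_univ_six, Matrix.one_apply]
  have r40 : (blk3 1 1 1 * g) 0 = g 0 + g 2 + g 4 := by
    funext j; simp [Matrix.mul_apply, Fin.sum_univ_six, Matrix.one_apply]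
  have r41 : (blk3 1 1 1 * g) 1 = g 1 + g 3 + g 5 := by
    funext j; simp [Matrix.mul_apply, Fin.sum_univ_six, Matrix.one_apply]
  obtain ⟨e02, e03, e04, e05⟩ := mem1 (r10 ▸ rows_in _ g h1 0)
  obtain ⟨e12, e13, e14, e15⟩ := mem1 (r11 ▸ rows_in _ g h1 1)
  obtain ⟨e20, e21, e24, e25⟩ := mem2 (r20 ▸ rows_in _ g h2 0)
  obtain ⟨e30, e31, e34, e35⟩ := mem2 (r21 ▸ rows_in _ g h2 1)
  obtain ⟨e40, e41, e42, e43⟩ := mem3 (r30 ▸ rows_in _ g h3 0)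
  obtain ⟨e50, e51, e52, e53⟩ := mem3 (r31 ▸ rows_in _ g h3 1)
  obtain ⟨f0, f1, f2, f3⟩ := mem4 (r40 ▸ rows_in _ g h4 0)
  obtain ⟨p0, p1, p2, p3⟩ := mem4 (r41 ▸ rows_in _ g h4 1)
  simp only [Pi.add_apply, e02, e03, e04, e05, e12, e13, e14, e15, e20, e21, e24, e25,
    e30, e31, e34, e35, e40, e41, e42, e43, e50, e51, e52, e53,
    add_zero, zero_add] at f0 f1 f2 f3 p0 p1 p2 p3
  have E00 : blkAt g 0 0 0 0 = g 0 0 := rfl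
  have E01 : blkAt g 0 0 0 1 = g 0 1 := rfl
  have E10 : blkAt g 0 0 1 0 = g 1 0 := rfl
  have E11 : blkAt g 0 0 1 1 = g 1 1 := rfl
  ext i j
  fin_cases i <;> fin_cases j <;>
    simp [E00, E01, E10, E11] <;>
    first
      | rfl
      | assumption

lemma diag3_mul (A B : Matrix (Fin 2) (Fin 2) F3) :
    diag3 A * diag3 B = diag3 (A * B) := by
  ext i j
  fin_cases i <;> fin_cases j <;>
    simp [Matrix.mul_apply, Fin.sum_univ_six, Fin.sum_univ_two]

lemma vecMulLinear_mul (g h : Matrix (Fin 6) (Fin 6) F3) :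
    (Matrix.vecMulLinear h).comp g.vecMulLinear = (g * h).vecMulLinear := by
  apply LinearMap.ext; intro v
  simp [Matrix.vecMulLinear, Matrix.vecMul_vecMul]

lemma vecMulLinear_one :
    (1 : Matrix (Fin 6) (Fin 6) F3).vecMulLinear = LinearMap.id := by
  apply LinearMap.ext; intro v
  simp [Matrix.vecMulLinear, Matrix.vecMul_one]

/-- An invertible `g ∈ GL(6,3)` maps each of the four lines of `F4` to
itself (acting on row vectors) if and only if `g = diag(E, E, E)` for some
`E ∈ GL(2,3)`. -/
theorem stmt5 (g : Matrix (Fin 6) (Fin 6) F3) (hg : IsUnit g) :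
    (∀ ℓ ∈ F4, ℓ.map g.vecMulLinear = ℓ) ↔
      ∃ E : Matrix (Fin 2) (Fin 2) F3, IsUnit E ∧ g = diag3 E := by
  constructor
  · intro h
    have hgd := fwd g h
    refine ⟨blkAt g 0 0, ?_, hgd⟩
    have hdet : IsUnit g.det := (Matrix.isUnit_iff_isUnit_det g).mp hg
    have hinv : g * g⁻¹ = 1 := Matrix.mul_nonsing_inv g hdet
    have hfix' : ∀ ℓ ∈ F4, ℓ.map g⁻¹.vecMulLinear = ℓ := by
      intro ℓ hℓ
      conv_lhs => rw [← h ℓ hℓ]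
      rw [← Submodule.map_comp, vecMulLinear_mul, hinv, vecMulLinear_one,
        Submodule.map_id]
    have hgi := fwd g⁻¹ hfix'
    have h1 : diag3 (blkAt g 0 0) * diag3 (blkAt g⁻¹ 0 0) = 1 := by
      rw [← hgd, ← hgi]; exact hinv
    rw [diag3_mul] at h1
    have c := fun (i j : Fin 6) => congrFun (congrFun h1 i) j
    have hEE : blkAt g 0 0 * blkAt g⁻¹ 0 0 = 1 := by
      ext a b
      fin_cases a <;> fin_cases b
      · simpa [Matrix.one_apply] using c 0 0
      · simpa [Matrix.one_apply] using c 0 1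
      · simpa [Matrix.one_apply] using c 1 0
      · simpa [Matrix.one_apply] using c 1 1
    have := invertibleOfRightInverse _ _ hEE
    exact isUnit_of_invertible _
  · rintro ⟨E, hE, rfl⟩
    intro ℓ hℓ
    have b1 : blk3 E 0 0 = E * blk3 1 0 0 := by rw [mul_blk3, mul_one, mul_zero]
    have b2 : blk3 0 E 0 = E * blk3 0 1 0 := by rw [mul_blk3, mul_one, mul_zero]
    have b3 : blk3 0 0 E = E * blk3 0 0 1 := by rw [mul_blk3, mul_one, mul_zero]
    have b4 : blk3 E E E = E * blk3 1 1 1 := by rw [mul_blk3, mul_one]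
    rcases hℓ with rfl | rfl | rfl | rfl
    · rw [lineOf_map, blk3_mul_diag3, Matrix.one_mul, Matrix.zero_mul, b1,
        lineOf_unit_mul hE]
    · rw [lineOf_map, blk3_mul_diag3, Matrix.one_mul, Matrix.zero_mul, b2,
        lineOf_unit_mul hE]
    · rw [lineOf_map, blk3_mul_diag3, Matrix.one_mul, Matrix.zero_mul, b3,
        lineOf_unit_mul hE]
    · rw [lineOf_map, blk3_mul_diag3, Matrix.one_mul, b4, lineOf_unit_mul hE]
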